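/- Let φ:[0,T]→[0,∞) be a bounded Borel measurable function and suppose there exist constants a, α, β ≥ 0 such that for all t ∈ [0,T], φ(t)² ≤ a + 2α∫₀ᵗ φ(s) ds + 2β∫₀ᵗ φ(s)² ds. Then for all t ∈ [0,T], φ(t) ≤ √a · e^{βt} + α·(e^{βt} − 1)/β. -/

import Mathlib

open MeasureTheory Real Set

lemma gronwall_quad_aux (T : ℝ) (hT : 0 < T) (φ : ℝ → ℝ)
    (hφ_meas : Measurable φ)
    (hφ_nonneg : ∀ t ∈ Set.Icc 0 T, 0 ≤ φ t)
    (M : ℝ) (hM : ∀ t ∈ Set.Icc 0 T, φ t ≤ M)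
    (a α β : ℝ) (ha : 0 ≤ a) (hα : 0 ≤ α) (hβ : 0 < β)
    (hineq : ∀ t ∈ Set.Icc 0 T,
      φ t ^ 2 ≤ a + 2 * α * (∫ s in (0:ℝ)..t, φ s) + 2 * β * (∫ s in (0:ℝ)..t, φ s ^ 2))
    (ε : ℝ) (hε : 0 < ε) :
    ∀ t ∈ Set.Icc 0 T,
      φ t ≤ Real.sqrt (a + ε) * Real.exp (β * t) + α * (Real.exp (β * t) - 1) / β := by
  have haε : (0:ℝ) ≤ a + ε := by linarith
  set v : ℝ → ℝ := fun t => Real.sqrt (a + ε) * Real.exp (β * t)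
    + α * (Real.exp (β * t) - 1) / β with hv
  have hv0 : v 0 = Real.sqrt (a + ε) := by simp [hv]
  have hexp : ∀ t : ℝ, HasDerivAt (fun s => Real.exp (β * s)) (β * Real.exp (β * t)) t := by
    intro t
    have := ((hasDerivAt_id t).const_mul β).exp
    simpa [mul_comm] using this
  have hvderiv : ∀ t : ℝ, HasDerivAt v (β * v t + α) t := by
    intro t
    have h1 := ((hexp t).const_mul (Real.sqrt (a + ε)))
    have h2 := (((hexp t).sub_const 1).const_mul α).div_const β
    have := h1.fun_add h2
    refine this.congr_deriv ?_
    simp only [hv]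
    field_simp [hv]
    ring
  have hvcont : Continuous v :=
    Differentiable.continuous (fun t => (hvderiv t).differentiableAt)
  have hvnonneg : ∀ t : ℝ, 0 ≤ t → 0 ≤ v t := by
    intro t ht
    have h1 : 0 ≤ Real.sqrt (a + ε) * Real.exp (β * t) :=
      mul_nonneg (Real.sqrt_nonneg _) (Real.exp_nonneg _)
    have h2 : (1:ℝ) ≤ Real.exp (β * t) := by
      rw [show (1:ℝ) = Real.exp 0 by simp]
      exact Real.exp_le_exp.mpr (by positivity)
    have h3 : 0 ≤ α * (Real.exp (β * t) - 1) / β := by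
      apply div_nonneg _ hβ.le
      apply mul_nonneg hα
      linarith
    simp only [hv]
    linarith
  -- nonnegativity of M
  have hM0 : 0 ≤ M := le_trans (hφ_nonneg 0 ⟨le_refl 0, hT.le⟩) (hM 0 ⟨le_refl 0, hT.le⟩)
  -- integrability of φ and φ^2 on Icc 0 T
  have hbdd : ∀ᵐ s ∂(volume.restrict (Icc (0:ℝ) T)), ‖φ s‖ ≤ M := by
    rw [ae_restrict_iff' measurableSet_Icc]
    exact ae_of_all _ fun s hs => by
      rw [Real.norm_eq_abs, abs_of_nonneg (hφ_nonneg s hs)]; exact hM s hs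
  have hbdd2 : ∀ᵐ s ∂(volume.restrict (Icc (0:ℝ) T)), ‖φ s ^ 2‖ ≤ M ^ 2 := by
    rw [ae_restrict_iff' measurableSet_Icc]
    exact ae_of_all _ fun s hs => by
      rw [Real.norm_eq_abs, abs_of_nonneg (sq_nonneg _)]
      exact pow_le_pow_left₀ (hφ_nonneg s hs) (hM s hs) 2
  have hφint : IntegrableOn φ (Icc (0:ℝ) T) volume :=
    Measure.integrableOn_of_bounded measure_Icc_lt_top.ne
      hφ_meas.aestronglyMeasurable hbdd
  have hφ2int : IntegrableOn (fun s => φ s ^ 2) (Icc (0:ℝ) T) volume :=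
    Measure.integrableOn_of_bounded measure_Icc_lt_top.ne
      ((hφ_meas.pow_const 2).aestronglyMeasurable) hbdd2
  have hφII : ∀ t ∈ Icc (0:ℝ) T, IntervalIntegrable φ volume 0 t := by
    intro t ht
    apply IntegrableOn.intervalIntegrable
    rw [uIcc_of_le ht.1]
    exact hφint.mono_set (Icc_subset_Icc le_rfl ht.2)
  have hφ2II : ∀ t ∈ Icc (0:ℝ) T, IntervalIntegrable (fun s => φ s ^ 2) volume 0 t := by
    intro t ht
    apply IntegrableOn.intervalIntegrable
    rw [uIcc_of_le ht.1]
    exact hφ2int.mono_set (Icc_subset_Icc le_rfl ht.2)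
  -- the function A
  set A : ℝ → ℝ := fun t => a + 2 * α * (∫ s in (0:ℝ)..t, φ s)
    + 2 * β * (∫ s in (0:ℝ)..t, φ s ^ 2) with hA
  have hA_cont : ContinuousOn A (Icc (0:ℝ) T) := by
    have h1 : ContinuousOn (fun t => ∫ s in (0:ℝ)..t, φ s) (Icc (0:ℝ) T) := by
      have := intervalIntegral.continuousOn_primitive_interval
        (a := (0:ℝ)) (b := T) (μ := volume) (f := φ) (by rwa [uIcc_of_le hT.le])
      rwa [uIcc_of_le hT.le] at this
    have h2 : ContinuousOn (fun t => ∫ s in (0:ℝ)..t, φ s ^ 2) (Icc (0:ℝ) T) := by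
      have := intervalIntegral.continuousOn_primitive_interval
        (a := (0:ℝ)) (b := T) (μ := volume) (f := fun s => φ s ^ 2)
        (by rwa [uIcc_of_le hT.le])
      rwa [uIcc_of_le hT.le] at this
    exact (continuousOn_const.add (continuousOn_const.mul h1)).add
      (continuousOn_const.mul h2)
  -- main claim: A t < v t ^ 2 on Icc 0 T
  have key : ∀ t ∈ Icc (0:ℝ) T, A t < v t ^ 2 := by
    by_contra hcon
    push_neg at hcon
    obtain ⟨t₀, ht₀, ht₀le⟩ := hcon
    set S : Set ℝ := Icc (0:ℝ) T ∩ (fun t => v t ^ 2 - A t) ⁻¹' (Iic 0) with hS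
    have hSne : S.Nonempty := ⟨t₀, ht₀, by simpa using ht₀le⟩
    have hScl : IsClosed S := by
      apply ContinuousOn.preimage_isClosed_of_isClosed _ isClosed_Icc isClosed_Iic
      exact ((hvcont.pow 2).continuousOn).sub hA_cont
    have hSbdd : BddBelow S := ⟨0, fun x hx => hx.1.1⟩
    set t' := sInf S with ht'
    have ht'S : t' ∈ S := hScl.csInf_mem hSne hSbdd
    have ht'Icc : t' ∈ Icc (0:ℝ) T := ht'S.1
    have hAt' : v t' ^ 2 ≤ A t' := by
      have := ht'S.2
      simp only [mem_preimage, mem_Iic] at this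
      linarith
    have hA0 : A 0 = a := by simp [hA]
    have ht'pos : 0 < t' := by
      rcases lt_or_eq_of_le ht'Icc.1 with h | h
      · exact h
      · exfalso
        rw [← h] at hAt'
        rw [hA0, hv0, Real.sq_sqrt haε] at hAt'
        linarith
    -- for s in Ico 0 t', φ s ≤ v s
    have hφv : ∀ s ∈ Ico (0:ℝ) t', φ s ≤ v s := by
      intro s hs
      have hsIcc : s ∈ Icc (0:ℝ) T := ⟨hs.1, le_trans hs.2.le ht'Icc.2⟩
      have hsnotS : s ∉ S := notMem_of_lt_csInf hs.2 hSbdd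
      have hAs : A s < v s ^ 2 := by
        by_contra h
        push_neg at h
        exact hsnotS ⟨hsIcc, by simp only [mem_preimage, mem_Iic]; linarith⟩
      have : φ s ^ 2 < v s ^ 2 := lt_of_le_of_lt (hineq s hsIcc) hAs
      exact (lt_of_pow_lt_pow_left₀ 2 (hvnonneg s hs.1) this).le
    have hφ2v : ∀ s ∈ Ico (0:ℝ) t', φ s ^ 2 ≤ v s ^ 2 := by
      intro s hs
      exact pow_le_pow_left₀ (hφ_nonneg s ⟨hs.1, le_trans hs.2.le ht'Icc.2⟩) (hφv s hs) 2
    -- a.e. versions on Icc 0 t'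
    have hrestr : volume.restrict (Icc (0:ℝ) t') = volume.restrict (Ico (0:ℝ) t') :=
      (Measure.restrict_congr_set Ico_ae_eq_Icc).symm
    have hae1 : φ ≤ᵐ[volume.restrict (Icc (0:ℝ) t')] v := by
      rw [hrestr]
      exact (ae_restrict_iff' measurableSet_Ico).mpr (ae_of_all _ hφv)
    have hae2 : (fun s => φ s ^ 2) ≤ᵐ[volume.restrict (Icc (0:ℝ) t')]
        (fun s => v s ^ 2) := by
      rw [hrestr]
      exact (ae_restrict_iff' measurableSet_Ico).mpr (ae_of_all _ hφ2v)
    have hvII : IntervalIntegrable v volume 0 t' := hvcont.intervalIntegrable _ _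
    have hv2II : IntervalIntegrable (fun s => v s ^ 2) volume 0 t' :=
      (hvcont.pow 2).intervalIntegrable _ _
    have hint1 : (∫ s in (0:ℝ)..t', φ s) ≤ ∫ s in (0:ℝ)..t', v s :=
      intervalIntegral.integral_mono_ae_restrict ht'Icc.1 (hφII t' ht'Icc) hvII hae1
    have hint2 : (∫ s in (0:ℝ)..t', φ s ^ 2) ≤ ∫ s in (0:ℝ)..t', v s ^ 2 :=
      intervalIntegral.integral_mono_ae_restrict ht'Icc.1 (hφ2II t' ht'Icc) hv2II hae2
    -- FTC for v^2
    have hftc : (∫ s in (0:ℝ)..t', (2 * α * v s + 2 * β * v s ^ 2))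
        = v t' ^ 2 - (a + ε) := by
      have hd : ∀ s ∈ uIcc (0:ℝ) t', HasDerivAt (fun u => v u ^ 2)
          (2 * α * v s + 2 * β * v s ^ 2) s := by
        intro s _
        have := (hvderiv s).fun_pow 2
        refine this.congr_deriv ?_
        ring
      have hci : IntervalIntegrable (fun s => 2 * α * v s + 2 * β * v s ^ 2)
          volume 0 t' :=
        ((continuous_const.mul hvcont).add
          (continuous_const.mul (hvcont.pow 2))).intervalIntegrable _ _
      rw [intervalIntegral.integral_eq_sub_of_hasDerivAt hd hci, hv0,
        Real.sq_sqrt haε]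
    have hsplit : (∫ s in (0:ℝ)..t', (2 * α * v s + 2 * β * v s ^ 2))
        = 2 * α * (∫ s in (0:ℝ)..t', v s) + 2 * β * (∫ s in (0:ℝ)..t', v s ^ 2) := by
      rw [intervalIntegral.integral_add ((hvII.const_mul (2 * α)))
        ((hv2II.const_mul (2 * β))), intervalIntegral.integral_const_mul,
        intervalIntegral.integral_const_mul]
    have hfinal : A t' ≤ v t' ^ 2 - ε := by
      have h1 : A t' ≤ a + 2 * α * (∫ s in (0:ℝ)..t', v s)
          + 2 * β * (∫ s in (0:ℝ)..t', v s ^ 2) := by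
        simp only [hA]
        have := mul_le_mul_of_nonneg_left hint1 (by linarith : (0:ℝ) ≤ 2 * α)
        have := mul_le_mul_of_nonneg_left hint2 (by linarith : (0:ℝ) ≤ 2 * β)
        linarith [mul_le_mul_of_nonneg_left hint1 (by linarith : (0:ℝ) ≤ 2 * α),
          mul_le_mul_of_nonneg_left hint2 (by linarith : (0:ℝ) ≤ 2 * β)]
      linarith [h1, hsplit, hftc]
    linarith
  -- conclude
  intro t ht
  have h1 : φ t ^ 2 < v t ^ 2 := lt_of_le_of_lt (hineq t ht) (key t ht)
  exact (lt_of_pow_lt_pow_left₀ 2 (hvnonneg t ht.1) h1).le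

/-- Gronwall's lemma with quadratic term. -/
theorem stmt_0 (T : ℝ) (hT : 0 < T) (φ : ℝ → ℝ)
    (hφ_meas : Measurable φ)
    (hφ_nonneg : ∀ t ∈ Set.Icc 0 T, 0 ≤ φ t)
    (hφ_bdd : ∃ M, ∀ t ∈ Set.Icc 0 T, φ t ≤ M)
    (a α β : ℝ) (ha : 0 ≤ a) (hα : 0 ≤ α) (hβ : 0 < β)
    (hineq : ∀ t ∈ Set.Icc 0 T,
      φ t ^ 2 ≤ a + 2 * α * (∫ s in (0:ℝ)..t, φ s) + 2 * β * (∫ s in (0:ℝ)..t, φ s ^ 2)) :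
    ∀ t ∈ Set.Icc 0 T,
      φ t ≤ Real.sqrt a * Real.exp (β * t) + α * (Real.exp (β * t) - 1) / β := by
  obtain ⟨M, hM⟩ := hφ_bdd
  intro t ht
  have key : ∀ ε ∈ Set.Ioi (0:ℝ),
      φ t ≤ Real.sqrt (a + ε) * Real.exp (β * t) + α * (Real.exp (β * t) - 1) / β :=
    fun ε hε => gronwall_quad_aux T hT φ hφ_meas hφ_nonneg M hM a α β ha hα hβ hineq ε hε t ht
  have htend : Filter.Tendsto
      (fun ε : ℝ => Real.sqrt (a + ε) * Real.exp (β * t) + α * (Real.exp (β * t) - 1) / β)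
      (nhdsWithin 0 (Set.Ioi 0))
      (nhds (Real.sqrt a * Real.exp (β * t) + α * (Real.exp (β * t) - 1) / β)) := by
    apply Filter.Tendsto.mono_left _ nhdsWithin_le_nhds
    have hc : Continuous (fun ε : ℝ =>
        Real.sqrt (a + ε) * Real.exp (β * t) + α * (Real.exp (β * t) - 1) / β) := by
      fun_prop
    have := hc.tendsto 0
    simpa using this
  exact ge_of_tendsto htend (eventually_nhdsWithin_of_forall key)
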